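/- Let λ(x) = Σ_{i<j}[log sin(x_i−x_j) + log sin(x_i+x_j)] + Σ_i [β log sin x_i + β' log cos x_i] with β, β' > 0 on C = {x : 0 < x_1 < ⋯ < x_N < π/2}. Then λ attains its maximum at a unique point ξ ∈ C, which is the unique critical point of λ in C. -/

import Mathlib

open Real

/-- The function `λ` of the trigonometric BC_N model. -/
noncomputable def lamBC (N : ℕ) (β β' : ℝ) (x : Fin N → ℝ) : ℝ :=
  (∑ i, ∑ j ∈ Finset.Ioi i,
      (Real.log (Real.sin (x i - x j)) + Real.log (Real.sin (x i + x j))))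
    + ∑ i, (β * Real.log (Real.sin (x i)) + β' * Real.log (Real.cos (x i)))

/-- The Weyl alcove `C = {0 < x₁ < ⋯ < x_N < π/2}`. -/
def weylAlcove (N : ℕ) : Set (Fin N → ℝ) :=
  {x | StrictMono x ∧ ∀ i, 0 < x i ∧ x i < π / 2}


lemma log_sin_nonpos (t : ℝ) : Real.log (Real.sin t) ≤ 0 := by
  rw [← Real.log_abs]
  exact Real.log_nonpos (abs_nonneg _) (abs_le.mpr ⟨Real.neg_one_le_sin t, Real.sin_le_one t⟩)

lemma log_cos_nonpos (t : ℝ) : Real.log (Real.cos t) ≤ 0 := by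
  rw [← Real.log_abs]
  exact Real.log_nonpos (abs_nonneg _) (abs_le.mpr ⟨Real.neg_one_le_cos t, Real.cos_le_one t⟩)

lemma combo_lt {a b u v u' v' : ℝ} (ha : 0 ≤ a) (hb : 0 ≤ b) (hab : a + b = 1)
    (h1 : u < u') (h2 : v < v') : a * u + b * v < a * u' + b * v' := by
  rcases eq_or_lt_of_le ha with h | h
  · have hb1 : b = 1 := by linarith
    rw [← h, hb1]; simpa using h2
  · have e1 := mul_lt_mul_of_pos_left h1 h
    have e2 := mul_le_mul_of_nonneg_left h2.le hb
    linarith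

lemma sum_le_of_mem {α : Type*} [DecidableEq α] {s : Finset α} {f : α → ℝ} {i : α} (hi : i ∈ s)
    (h : ∀ k ∈ s, f k ≤ 0) : ∑ k ∈ s, f k ≤ f i := by
  rw [← Finset.sum_erase_add s f hi]
  have : ∑ k ∈ s.erase i, f k ≤ 0 :=
    Finset.sum_nonpos fun k hk => h k (Finset.mem_of_mem_erase hk)
  linarith

lemma convex_weylAlcove (N : ℕ) : Convex ℝ (weylAlcove N) := by
  intro x hx y hy a b ha hb hab
  obtain ⟨hxm, hxb⟩ := hx
  obtain ⟨hym, hyb⟩ := hy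
  constructor
  · intro i j hij
    have := combo_lt ha hb hab (hxm hij) (hym hij)
    simpa using this
  · intro i
    constructor
    · have := combo_lt ha hb hab (hxb i).1 (hyb i).1
      simpa using this
    · have := combo_lt ha hb hab (hxb i).2 (hyb i).2
      have h2 : a * (π/2) + b * (π/2) = π/2 := by rw [← add_mul, hab, one_mul]
      simp only [Pi.add_apply, Pi.smul_apply, smul_eq_mul]
      linarith

lemma isOpen_weylAlcove (N : ℕ) : IsOpen (weylAlcove N) := by
  have : weylAlcove N
      = (⋂ i, ⋂ j, ⋂ (_ : i < j), {x : Fin N → ℝ | x i < x j}) ∩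
        ((⋂ i, {x : Fin N → ℝ | 0 < x i}) ∩ (⋂ i, {x : Fin N → ℝ | x i < π / 2})) := by
    ext x
    simp only [Set.mem_setOf_eq, Set.mem_inter_iff, Set.mem_iInter, StrictMono]
    constructor
    · rintro ⟨h1, h2⟩; exact ⟨fun i j hij => h1 hij, fun i => (h2 i).1, fun i => (h2 i).2⟩
    · rintro ⟨h1, h2, h3⟩; exact ⟨fun i j hij => h1 i j hij, fun i => ⟨h2 i, h3 i⟩⟩
  rw [this]
  refine IsOpen.inter ?_ (IsOpen.inter ?_ ?_)
  · exact isOpen_iInter_of_finite fun i => isOpen_iInter_of_finite fun j =>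
      isOpen_iInter_of_finite fun _ => isOpen_lt (continuous_apply i) (continuous_apply j)
  · exact isOpen_iInter_of_finite fun i => isOpen_lt continuous_const (continuous_apply i)
  · exact isOpen_iInter_of_finite fun i => isOpen_lt (continuous_apply i) continuous_const


lemma strictConcaveOn_mul_log_sin {c : ℝ} (hc : 0 < c) :
    StrictConcaveOn ℝ (Set.Ioo 0 π) (fun t => c * Real.log (Real.sin t)) := by
  have hsin : ∀ t ∈ Set.Ioo (0:ℝ) π, Real.sin t ≠ 0 := fun t ht =>
    (Real.sin_pos_of_pos_of_lt_pi ht.1 ht.2).ne'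
  apply strictConcaveOn_of_deriv2_neg (convex_Ioo _ _)
  · exact continuousOn_const.mul
      (Real.continuous_sin.continuousOn.log fun t ht => hsin t ht)
  · intro t ht
    rw [interior_Ioo] at ht
    have hd1 : ∀ u ∈ Set.Ioo (0:ℝ) π,
        HasDerivAt (fun s => c * Real.log (Real.sin s)) (c * (Real.cos u / Real.sin u)) u :=
      fun u hu => ((Real.hasDerivAt_sin u).log (hsin u hu)).const_mul c
    have heq : deriv (fun s => c * Real.log (Real.sin s))
        =ᶠ[nhds t] (fun u => c * (Real.cos u / Real.sin u)) :=
      Filter.eventuallyEq_of_mem (isOpen_Ioo.mem_nhds ht) fun u hu => (hd1 u hu).deriv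
    have hd2 : HasDerivAt (fun u => c * (Real.cos u / Real.sin u))
        (c * ((-Real.sin t * Real.sin t - Real.cos t * Real.cos t) / Real.sin t ^ 2)) t :=
      (((Real.hasDerivAt_cos t).div (Real.hasDerivAt_sin t) (hsin t ht))).const_mul c
    have h2 : deriv^[2] (fun s => c * Real.log (Real.sin s)) t
        = c * ((-Real.sin t * Real.sin t - Real.cos t * Real.cos t) / Real.sin t ^ 2) := by
      simp only [Function.iterate_succ, Function.iterate_zero, Function.comp_apply, id_eq]
      rw [heq.deriv_eq]
      exact hd2.deriv
    rw [h2]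
    apply mul_neg_of_pos_of_neg hc
    apply div_neg_of_neg_of_pos
    · nlinarith [Real.sin_sq_add_cos_sq t]
    · exact pow_pos (Real.sin_pos_of_pos_of_lt_pi ht.1 ht.2) 2

lemma strictConcaveOn_mul_log_cos {c : ℝ} (hc : 0 < c) :
    StrictConcaveOn ℝ (Set.Ioo (-(π/2)) (π/2)) (fun t => c * Real.log (Real.cos t)) := by
  have hcos : ∀ t ∈ Set.Ioo (-(π/2)) (π/2), Real.cos t ≠ 0 := fun t ht =>
    (Real.cos_pos_of_mem_Ioo ht).ne'
  apply strictConcaveOn_of_deriv2_neg (convex_Ioo _ _)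
  · exact continuousOn_const.mul
      (Real.continuous_cos.continuousOn.log fun t ht => hcos t ht)
  · intro t ht
    rw [interior_Ioo] at ht
    have hd1 : ∀ u ∈ Set.Ioo (-(π/2)) (π/2),
        HasDerivAt (fun s => c * Real.log (Real.cos s)) (c * (-Real.sin u / Real.cos u)) u :=
      fun u hu => ((Real.hasDerivAt_cos u).log (hcos u hu)).const_mul c
    have heq : deriv (fun s => c * Real.log (Real.cos s))
        =ᶠ[nhds t] (fun u => c * (-Real.sin u / Real.cos u)) :=
      Filter.eventuallyEq_of_mem (isOpen_Ioo.mem_nhds ht) fun u hu => (hd1 u hu).deriv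
    have hd2 : HasDerivAt (fun u => c * (-Real.sin u / Real.cos u))
        (c * ((-Real.cos t * Real.cos t - -Real.sin t * -Real.sin t) / Real.cos t ^ 2)) t :=
      (((Real.hasDerivAt_sin t).neg.div (Real.hasDerivAt_cos t) (hcos t ht))).const_mul c
    have h2 : deriv^[2] (fun s => c * Real.log (Real.cos s)) t
        = c * ((-Real.cos t * Real.cos t - -Real.sin t * -Real.sin t) / Real.cos t ^ 2) := by
      simp only [Function.iterate_succ, Function.iterate_zero, Function.comp_apply, id_eq]
      rw [heq.deriv_eq]
      exact hd2.deriv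
    rw [h2]
    apply mul_neg_of_pos_of_neg hc
    apply div_neg_of_neg_of_pos
    · nlinarith [Real.sin_sq_add_cos_sq t]
    · exact pow_pos (Real.cos_pos_of_mem_Ioo ht) 2



lemma concaveOn_log_sin_comp {N : ℕ} (ℓ : (Fin N → ℝ) → ℝ)
    (hℓ : ∀ (a b : ℝ) (x y : Fin N → ℝ), ℓ (a • x + b • y) = a * ℓ x + b * ℓ y)
    (h : ∀ x ∈ weylAlcove N, ℓ x ∈ Set.Ioo 0 π) :
    ConcaveOn ℝ (weylAlcove N) (fun x => Real.log (Real.sin (ℓ x))) := by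
  have h1 := (strictConcaveOn_mul_log_sin (c := 1) one_pos).concaveOn
  refine ⟨convex_weylAlcove N, ?_⟩
  intro x hx y hy a b ha hb hab
  have key := h1.2 (h x hx) (h y hy) ha hb hab
  simp only [smul_eq_mul, one_mul] at key ⊢
  rw [hℓ a b x y]
  exact key


lemma concaveOn_sum {ι E : Type*} [AddCommGroup E] [Module ℝ E] (s : Finset ι)
    {f : ι → E → ℝ} {C : Set E} (hC : Convex ℝ C) (h : ∀ i ∈ s, ConcaveOn ℝ C (f i)) :
    ConcaveOn ℝ C (fun x => ∑ i ∈ s, f i x) := by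
  classical
  induction s using Finset.induction with
  | empty => simpa using concaveOn_const (0:ℝ) hC
  | insert _ _ hni ih =>
    rename_i a s
    simp only [Finset.sum_insert hni]
    exact (h a (Finset.mem_insert_self a s)).add
      (ih fun i hi => h i (Finset.mem_insert_of_mem hi))

lemma lamBC_eq (N : ℕ) (β β' : ℝ) : lamBC N β β' = fun x =>
    (∑ i, ∑ j ∈ Finset.Ioi i,
      (Real.log (Real.sin (x j - x i)) + Real.log (Real.sin (x i + x j))))
    + ∑ i, (β * Real.log (Real.sin (x i)) + β' * Real.log (Real.cos (x i))) := by
  funext x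
  unfold lamBC
  congr 1
  refine Finset.sum_congr rfl fun i _ => Finset.sum_congr rfl fun j _ => ?_
  rw [show x i - x j = -(x j - x i) by ring, Real.sin_neg, Real.log_neg_eq_log]

lemma concaveOn_S1 (N : ℕ) : ConcaveOn ℝ (weylAlcove N) (fun x =>
    ∑ i, ∑ j ∈ Finset.Ioi i,
      (Real.log (Real.sin (x j - x i)) + Real.log (Real.sin (x i + x j)))) := by
  apply concaveOn_sum _ (convex_weylAlcove N)
  intro i _
  apply concaveOn_sum _ (convex_weylAlcove N)
  intro j hj
  have hij : i < j := Finset.mem_Ioi.mp hj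
  have h1 : ConcaveOn ℝ (weylAlcove N) (fun x : Fin N → ℝ => Real.log (Real.sin (x j - x i))) := by
    apply concaveOn_log_sin_comp (fun x : Fin N → ℝ => x j - x i)
    · intro a b x y
      simp only [Pi.add_apply, Pi.smul_apply, smul_eq_mul]
      ring
    · intro x hx
      obtain ⟨hm, hb⟩ := hx
      have := hm hij
      have h1 := (hb i).1; have h2 := (hb j).2
      constructor
      · linarith
      · linarith [Real.pi_pos]
  have h2 : ConcaveOn ℝ (weylAlcove N) (fun x : Fin N → ℝ => Real.log (Real.sin (x i + x j))) := by
    apply concaveOn_log_sin_comp (fun x : Fin N → ℝ => x i + x j)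
    · intro a b x y
      simp only [Pi.add_apply, Pi.smul_apply, smul_eq_mul]
      ring
    · intro x hx
      obtain ⟨hm, hb⟩ := hx
      have h1 := (hb i).1; have h2 := (hb i).2
      have h3 := (hb j).1; have h4 := (hb j).2
      constructor
      · linarith
      · linarith
  exact h1.add h2

lemma strictConcaveOn_phi {β β' : ℝ} (hβ : 0 < β) (hβ' : 0 < β') :
    StrictConcaveOn ℝ (Set.Ioo 0 (π/2))
      (fun t => β * Real.log (Real.sin t) + β' * Real.log (Real.cos t)) := by
  have hs1 : Set.Ioo (0:ℝ) (π/2) ⊆ Set.Ioo 0 π :=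
    Set.Ioo_subset_Ioo le_rfl (by linarith [Real.pi_pos])
  have hs2 : Set.Ioo (0:ℝ) (π/2) ⊆ Set.Ioo (-(π/2)) (π/2) :=
    Set.Ioo_subset_Ioo (by linarith [Real.pi_pos]) le_rfl
  have h1 := (strictConcaveOn_mul_log_sin hβ).subset hs1 (convex_Ioo _ _)
  have h2 := (strictConcaveOn_mul_log_cos hβ').subset hs2 (convex_Ioo _ _)
  exact h1.add h2

lemma strictConcaveOn_S2 (N : ℕ) {β β' : ℝ} (hβ : 0 < β) (hβ' : 0 < β') :
    StrictConcaveOn ℝ (weylAlcove N) (fun x =>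
      ∑ i, (β * Real.log (Real.sin (x i)) + β' * Real.log (Real.cos (x i)))) := by
  set φ : ℝ → ℝ := fun t => β * Real.log (Real.sin t) + β' * Real.log (Real.cos t) with hφdef
  have hφ := strictConcaveOn_phi hβ hβ'
  refine ⟨convex_weylAlcove N, ?_⟩
  intro x hx y hy hxy a b ha hb hab
  obtain ⟨i0, hi0⟩ := Function.ne_iff.mp hxy
  simp only [smul_eq_mul, Finset.mul_sum, ← Finset.sum_add_distrib]
  apply Finset.sum_lt_sum
  · intro i _
    have hxi : x i ∈ Set.Ioo 0 (π/2) := ⟨(hx.2 i).1, (hx.2 i).2⟩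
    have hyi : y i ∈ Set.Ioo 0 (π/2) := ⟨(hy.2 i).1, (hy.2 i).2⟩
    have := hφ.concaveOn.2 hxi hyi ha.le hb.le hab
    simpa [Pi.add_apply, smul_eq_mul] using this
  · refine ⟨i0, Finset.mem_univ i0, ?_⟩
    have hxi : x i0 ∈ Set.Ioo 0 (π/2) := ⟨(hx.2 i0).1, (hx.2 i0).2⟩
    have hyi : y i0 ∈ Set.Ioo 0 (π/2) := ⟨(hy.2 i0).1, (hy.2 i0).2⟩
    have := hφ.2 hxi hyi hi0 ha hb hab
    simpa [Pi.add_apply, smul_eq_mul] using this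

lemma strictConcaveOn_lamBC (N : ℕ) {β β' : ℝ} (hβ : 0 < β) (hβ' : 0 < β') :
    StrictConcaveOn ℝ (weylAlcove N) (lamBC N β β') := by
  rw [lamBC_eq]
  have := (strictConcaveOn_S2 N hβ hβ').add_concaveOn (concaveOn_S1 N)
  have heq : (fun x : Fin N → ℝ =>
      ∑ i, (β * Real.log (Real.sin (x i)) + β' * Real.log (Real.cos (x i))))
      + (fun x => ∑ i, ∑ j ∈ Finset.Ioi i,
        (Real.log (Real.sin (x j - x i)) + Real.log (Real.sin (x i + x j))))
      = fun x => (∑ i, ∑ j ∈ Finset.Ioi i,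
        (Real.log (Real.sin (x j - x i)) + Real.log (Real.sin (x i + x j))))
        + ∑ i, (β * Real.log (Real.sin (x i)) + β' * Real.log (Real.cos (x i))) := by
    funext x; simp [Pi.add_apply]; ring
  rwa [heq] at this



lemma differentiableAt_lamBC {N : ℕ} {β β' : ℝ} {x : Fin N → ℝ} (hx : x ∈ weylAlcove N) :
    DifferentiableAt ℝ (lamBC N β β') x := by
  obtain ⟨hm, hb⟩ := hx
  have hev : ∀ i : Fin N, DifferentiableAt ℝ (fun y : Fin N → ℝ => y i) x := fun i =>
    (ContinuousLinearMap.proj (R := ℝ) (φ := fun _ : Fin N => ℝ) i).differentiableAt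
  unfold lamBC
  apply DifferentiableAt.add
  · apply DifferentiableAt.fun_sum
    intro i _
    apply DifferentiableAt.fun_sum
    intro j hj
    have hij : i < j := Finset.mem_Ioi.mp hj
    have h1 := (hb i).1; have h2 := (hb i).2
    have h3 := (hb j).1; have h4 := (hb j).2
    have h5 : x i < x j := hm hij
    apply DifferentiableAt.add
    · apply DifferentiableAt.log (((hev i).sub (hev j)).sin)
      have : Real.sin (x i - x j) < 0 :=
        Real.sin_neg_of_neg_of_neg_pi_lt (by linarith) (by linarith [Real.pi_pos])
      exact this.ne
    · apply DifferentiableAt.log (((hev i).add (hev j)).sin)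
      have : 0 < Real.sin (x i + x j) :=
        Real.sin_pos_of_pos_of_lt_pi (by linarith) (by linarith)
      exact this.ne'
  · apply DifferentiableAt.fun_sum
    intro i _
    have h1 := (hb i).1; have h2 := (hb i).2
    apply DifferentiableAt.add
    · apply DifferentiableAt.const_mul
      apply DifferentiableAt.log ((hev i).sin)
      exact (Real.sin_pos_of_pos_of_lt_pi h1 (by linarith [Real.pi_pos])).ne'
    · apply DifferentiableAt.const_mul
      apply DifferentiableAt.log ((hev i).cos)
      exact (Real.cos_pos_of_mem_Ioo ⟨by linarith [Real.pi_pos], h2⟩).ne'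




lemma x0_mem (N : ℕ) :
    (fun i : Fin N => ((i : ℕ) + 1 : ℝ) * (π / 2 / (N + 1))) ∈ weylAlcove N := by
  have hc : 0 < π / 2 / (N + 1 : ℝ) := by positivity
  constructor
  · intro i j hij
    have : ((i : ℕ) + 1 : ℝ) < ((j : ℕ) + 1 : ℝ) := by
      have : (i : ℕ) < (j : ℕ) := hij
      exact_mod_cast Nat.succ_lt_succ this
    exact mul_lt_mul_of_pos_right this hc
  · intro i
    constructor
    · positivity
    · have h1 : ((i : ℕ) + 1 : ℝ) < (N + 1 : ℝ) := by exact_mod_cast Nat.succ_lt_succ i.isLt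
      have h2 := mul_lt_mul_of_pos_right h1 hc
      have h3 : (N + 1 : ℝ) * (π / 2 / (N + 1)) = π / 2 := by
        field_simp
      linarith

theorem lamBC_unique_max (N : ℕ) (β β' : ℝ) (hβ : 0 < β) (hβ' : 0 < β') :
    ∃ ξ ∈ weylAlcove N,
      IsMaxOn (lamBC N β β') (weylAlcove N) ξ ∧
      fderiv ℝ (lamBC N β β') ξ = 0 ∧
      ∀ y ∈ weylAlcove N,
        (IsMaxOn (lamBC N β β') (weylAlcove N) y ∨ fderiv ℝ (lamBC N β β') y = 0) →
          y = ξ := by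
  classical
  set C := weylAlcove N with hCdef
  set f := lamBC N β β' with hfdef
  have hconv : Convex ℝ C := convex_weylAlcove N
  have hopen : IsOpen C := isOpen_weylAlcove N
  have hdiff : ∀ x ∈ C, DifferentiableAt ℝ f x := fun x hx => differentiableAt_lamBC hx
  have hcont : ContinuousOn f C := fun x hx => (hdiff x hx).continuousAt.continuousWithinAt
  have hstrict : StrictConcaveOn ℝ C f := strictConcaveOn_lamBC N hβ hβ'
  -- single-term upper bounds
  have hS1_le : ∀ x : Fin N → ℝ,
      (∑ i, ∑ j ∈ Finset.Ioi i,
        (Real.log (Real.sin (x i - x j)) + Real.log (Real.sin (x i + x j)))) ≤ 0 := fun x =>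
    Finset.sum_nonpos fun i _ => Finset.sum_nonpos fun j _ =>
      add_nonpos (log_sin_nonpos _) (log_sin_nonpos _)
  have hS2term : ∀ (x : Fin N → ℝ) (i : Fin N),
      β * Real.log (Real.sin (x i)) + β' * Real.log (Real.cos (x i)) ≤ 0 := fun x i =>
    add_nonpos (mul_nonpos_of_nonneg_of_nonpos hβ.le (log_sin_nonpos _))
      (mul_nonpos_of_nonneg_of_nonpos hβ'.le (log_cos_nonpos _))
  have hsingle : ∀ (x : Fin N → ℝ) (i : Fin N),
      f x ≤ β * Real.log (Real.sin (x i)) ∧ f x ≤ β' * Real.log (Real.cos (x i)) := by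
    intro x i
    have h1 := hS1_le x
    have h2 : (∑ k, (β * Real.log (Real.sin (x k)) + β' * Real.log (Real.cos (x k))))
        ≤ β * Real.log (Real.sin (x i)) + β' * Real.log (Real.cos (x i)) :=
      sum_le_of_mem (Finset.mem_univ i) fun k _ => hS2term x k
    have h3 : f x ≤ β * Real.log (Real.sin (x i)) + β' * Real.log (Real.cos (x i)) := by
      rw [hfdef]; unfold lamBC; linarith
    have h4 := mul_nonpos_of_nonneg_of_nonpos hβ.le (log_sin_nonpos (x i))
    have h5 := mul_nonpos_of_nonneg_of_nonpos hβ'.le (log_cos_nonpos (x i))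
    constructor <;> linarith
  have hpair : ∀ (x : Fin N → ℝ) (i j : Fin N), i < j →
      f x ≤ Real.log (Real.sin (x j - x i)) ∧ f x ≤ Real.log (Real.sin (x i + x j)) := by
    intro x i j hij
    have hS2 : (∑ k, (β * Real.log (Real.sin (x k)) + β' * Real.log (Real.cos (x k)))) ≤ 0 :=
      Finset.sum_nonpos fun k _ => hS2term x k
    have h2 : (∑ i, ∑ j ∈ Finset.Ioi i,
          (Real.log (Real.sin (x i - x j)) + Real.log (Real.sin (x i + x j))))
        ≤ ∑ j ∈ Finset.Ioi i,
          (Real.log (Real.sin (x i - x j)) + Real.log (Real.sin (x i + x j))) :=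
      sum_le_of_mem (Finset.mem_univ i) fun k _ => Finset.sum_nonpos fun l _ =>
        add_nonpos (log_sin_nonpos _) (log_sin_nonpos _)
    have h3 : (∑ j ∈ Finset.Ioi i,
          (Real.log (Real.sin (x i - x j)) + Real.log (Real.sin (x i + x j))))
        ≤ Real.log (Real.sin (x i - x j)) + Real.log (Real.sin (x i + x j)) :=
      sum_le_of_mem (Finset.mem_Ioi.mpr hij) fun k _ =>
        add_nonpos (log_sin_nonpos _) (log_sin_nonpos _)
    have h4 : f x ≤ Real.log (Real.sin (x i - x j)) + Real.log (Real.sin (x i + x j)) := by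
      rw [hfdef]; unfold lamBC; linarith
    have hrw : Real.log (Real.sin (x i - x j)) = Real.log (Real.sin (x j - x i)) := by
      rw [show x i - x j = -(x j - x i) by ring, Real.sin_neg, Real.log_neg_eq_log]
    have h5 := log_sin_nonpos (x i + x j)
    have h6 := log_sin_nonpos (x i - x j)
    constructor
    · rw [← hrw]; linarith
    · linarith
  -- base point
  set x0 : Fin N → ℝ := fun i => ((i : ℕ) + 1 : ℝ) * (π / 2 / (N + 1)) with hx0def
  have hx0C : x0 ∈ C := x0_mem N
  set m : ℝ := f x0 with hmdef
  set δ : ℝ := min (Real.exp m) (min (Real.exp (m / β)) (Real.exp (m / β'))) with hδdef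
  have hδpos : 0 < δ := lt_min (Real.exp_pos _) (lt_min (Real.exp_pos _) (Real.exp_pos _))
  -- the compact box
  set D : Set (Fin N → ℝ) :=
    (⋂ i, (fun x : Fin N → ℝ => x i) ⁻¹' Set.Icc 0 (π / 2)) ∩
    ((⋂ i, ((fun x : Fin N → ℝ => Real.sin (x i)) ⁻¹' Set.Ici δ ∩
        (fun x : Fin N → ℝ => Real.cos (x i)) ⁻¹' Set.Ici δ)) ∩
      (⋂ i, ⋂ j, ⋂ (_ : i < j),
        ((fun x : Fin N → ℝ => Real.sin (x j - x i)) ⁻¹' Set.Ici δ ∩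
          (fun x : Fin N → ℝ => Real.sin (x i + x j)) ⁻¹' Set.Ici δ))) with hDdef
  have hDmem : ∀ x : Fin N → ℝ, x ∈ D ↔
      ((∀ i, x i ∈ Set.Icc 0 (π / 2)) ∧
        (∀ i, δ ≤ Real.sin (x i) ∧ δ ≤ Real.cos (x i)) ∧
        (∀ i j, i < j → δ ≤ Real.sin (x j - x i) ∧ δ ≤ Real.sin (x i + x j))) := by
    intro x
    simp only [hDdef, Set.mem_inter_iff, Set.mem_iInter, Set.mem_preimage, Set.mem_Ici]
  have hDC : D ⊆ C := by
    intro x hx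
    rw [hDmem] at hx
    obtain ⟨hicc, hsc, hpr⟩ := hx
    have hpos : ∀ i, 0 < x i := by
      intro i
      rcases lt_or_eq_of_le (hicc i).1 with h | h
      · exact h
      · exfalso
        have := (hsc i).1
        rw [← h] at this
        simp only [Real.sin_zero] at this
        linarith
    have hlt : ∀ i, x i < π / 2 := by
      intro i
      rcases lt_or_eq_of_le (hicc i).2 with h | h
      · exact h
      · exfalso
        have := (hsc i).2
        rw [h] at this
        simp only [Real.cos_pi_div_two] at this
        linarith
    refine ⟨?_, fun i => ⟨hpos i, hlt i⟩⟩
    intro i j hij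
    by_contra hle
    push_neg at hle
    have h1 : x j - x i ≤ 0 := by linarith
    have h2 : -π ≤ x j - x i := by
      have := (hicc j).1; have := (hicc i).2
      linarith [Real.pi_pos]
    have := Real.sin_nonpos_of_nonpos_of_neg_pi_le h1 h2
    have := (hpr i j hij).1
    linarith
  have hDclosed : IsClosed D := by
    refine IsClosed.inter ?_ (IsClosed.inter ?_ ?_)
    · exact isClosed_iInter fun i => IsClosed.preimage (continuous_apply i) isClosed_Icc
    · refine isClosed_iInter fun i => IsClosed.inter ?_ ?_
      · exact IsClosed.preimage (Real.continuous_sin.comp (continuous_apply i)) isClosed_Ici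
      · exact IsClosed.preimage (Real.continuous_cos.comp (continuous_apply i)) isClosed_Ici
    · refine isClosed_iInter fun i => isClosed_iInter fun j => isClosed_iInter fun _ =>
        IsClosed.inter ?_ ?_
      · exact IsClosed.preimage (Real.continuous_sin.comp ((continuous_apply j).sub (continuous_apply i))) isClosed_Ici
      · exact IsClosed.preimage (Real.continuous_sin.comp ((continuous_apply i).add (continuous_apply j))) isClosed_Ici
  have hDbdd : Bornology.IsBounded D := by
    have hsub : D ⊆ Set.pi Set.univ fun _ : Fin N => Set.Icc (0:ℝ) (π / 2) := by
      intro x hx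
      rw [Set.mem_univ_pi]
      intro i
      exact ((hDmem x).mp hx).1 i
    exact ((isCompact_univ_pi fun _ => isCompact_Icc).isBounded).subset hsub
  have hmemD : ∀ x ∈ C, m ≤ f x → x ∈ D := by
    intro x hxC hmx
    obtain ⟨hm', hb'⟩ := hxC
    rw [hDmem]
    refine ⟨fun i => ⟨(hb' i).1.le, (hb' i).2.le⟩, ?_, ?_⟩
    · intro i
      have hsinpos : 0 < Real.sin (x i) :=
        Real.sin_pos_of_pos_of_lt_pi (hb' i).1 (by linarith [(hb' i).2, Real.pi_pos])
      have hcospos : 0 < Real.cos (x i) :=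
        Real.cos_pos_of_mem_Ioo ⟨by linarith [(hb' i).1, Real.pi_pos], (hb' i).2⟩
      constructor
      · have h1 : m ≤ β * Real.log (Real.sin (x i)) := le_trans hmx (hsingle x i).1
        have h2 : m / β ≤ Real.log (Real.sin (x i)) := by
          rw [div_le_iff₀ hβ] at *
          nlinarith
        calc δ ≤ Real.exp (m / β) := le_trans (min_le_right _ _) (min_le_left _ _)
          _ ≤ Real.exp (Real.log (Real.sin (x i))) := Real.exp_le_exp.mpr h2
          _ = Real.sin (x i) := Real.exp_log hsinpos
      · have h1 : m ≤ β' * Real.log (Real.cos (x i)) := le_trans hmx (hsingle x i).2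
        have h2 : m / β' ≤ Real.log (Real.cos (x i)) := by
          rw [div_le_iff₀ hβ'] at *
          nlinarith
        calc δ ≤ Real.exp (m / β') := le_trans (min_le_right _ _) (min_le_right _ _)
          _ ≤ Real.exp (Real.log (Real.cos (x i))) := Real.exp_le_exp.mpr h2
          _ = Real.cos (x i) := Real.exp_log hcospos
    · intro i j hij
      have h1 := (hb' i).1; have h2 := (hb' i).2
      have h3 := (hb' j).1; have h4 := (hb' j).2
      have h5 : x i < x j := hm' hij
      have hsin1 : 0 < Real.sin (x j - x i) :=
        Real.sin_pos_of_pos_of_lt_pi (by linarith) (by linarith [Real.pi_pos])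
      have hsin2 : 0 < Real.sin (x i + x j) :=
        Real.sin_pos_of_pos_of_lt_pi (by linarith) (by linarith)
      constructor
      · calc δ ≤ Real.exp m := min_le_left _ _
          _ ≤ Real.exp (Real.log (Real.sin (x j - x i))) :=
            Real.exp_le_exp.mpr (le_trans hmx (hpair x i j hij).1)
          _ = Real.sin (x j - x i) := Real.exp_log hsin1
      · calc δ ≤ Real.exp m := min_le_left _ _
          _ ≤ Real.exp (Real.log (Real.sin (x i + x j))) :=
            Real.exp_le_exp.mpr (le_trans hmx (hpair x i j hij).2)
          _ = Real.sin (x i + x j) := Real.exp_log hsin2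
  -- the compact superlevel set
  set K : Set (Fin N → ℝ) := D ∩ f ⁻¹' Set.Ici m with hKdef
  have hKC : K ⊆ C := fun x hx => hDC hx.1
  have hKcl : IsClosed K := (hcont.mono hDC).preimage_isClosed_of_isClosed hDclosed isClosed_Ici
  have hKcpt : IsCompact K :=
    Metric.isCompact_of_isClosed_isBounded hKcl (hDbdd.subset Set.inter_subset_left)
  have hx0K : x0 ∈ K := ⟨hmemD x0 hx0C le_rfl, Set.mem_preimage.mpr (Set.mem_Ici.mpr le_rfl)⟩
  obtain ⟨ξ, hξK, hξmax⟩ := hKcpt.exists_isMaxOn ⟨x0, hx0K⟩ (hcont.mono hKC)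
  have hξC : ξ ∈ C := hKC hξK
  have hmaxC : IsMaxOn f C ξ := by
    rw [isMaxOn_iff]
    intro y hy
    by_cases hm2 : m ≤ f y
    · exact isMaxOn_iff.mp hξmax y ⟨hmemD y hy hm2, hm2⟩
    · push_neg at hm2
      have := isMaxOn_iff.mp hξmax x0 hx0K
      linarith
  have hfd : fderiv ℝ f ξ = 0 := (hmaxC.isLocalMax (hopen.mem_nhds hξC)).fderiv_eq_zero
  -- uniqueness of the maximizer
  have huniq : ∀ y ∈ C, IsMaxOn f C y → y = ξ := by
    intro y hy hym
    by_contra hne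
    have hmid : (1/2 : ℝ) • y + (1/2 : ℝ) • ξ ∈ C :=
      hconv hy hξC (by norm_num) (by norm_num) (by norm_num)
    have hlt := hstrict.2 hy hξC hne (by norm_num : (0:ℝ) < 1/2)
      (by norm_num : (0:ℝ) < 1/2) (by norm_num)
    have h1 : f ((1/2 : ℝ) • y + (1/2 : ℝ) • ξ) ≤ f ξ := isMaxOn_iff.mp hmaxC _ hmid
    have h2 : f ξ ≤ f y := isMaxOn_iff.mp hym ξ hξC
    have h3 : f y ≤ f ξ := isMaxOn_iff.mp hmaxC y hy
    simp only [smul_eq_mul] at hlt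
    linarith
  -- critical point implies maximum
  have hcrit : ∀ y ∈ C, fderiv ℝ f y = 0 → IsMaxOn f C y := by
    intro y hy hfy
    rw [isMaxOn_iff]
    intro z hz
    set g : ℝ → ℝ := fun t => f ((1 - t) • y + t • z) with hgdef
    have hpath : ∀ t ∈ Set.Icc (0:ℝ) 1, ((1 - t) • y + t • z) ∈ C := fun t ht =>
      hconv hy hz (by linarith [ht.2]) ht.1 (by ring)
    have hgconc : ConcaveOn ℝ (Set.Icc (0:ℝ) 1) g := by
      refine ⟨convex_Icc _ _, ?_⟩
      intro s hs t ht a b ha hb hab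
      have key := hstrict.concaveOn.2 (hpath s hs) (hpath t ht) ha hb hab
      have harg : (1 - (a * s + b * t)) • y + (a * s + b * t) • z =
          a • ((1 - s) • y + s • z) + b • ((1 - t) • y + t • z) := by
        have h1 : (1 : ℝ) - (a * s + b * t) = a * (1 - s) + b * (1 - t) := by
          linear_combination -1 * hab
        rw [h1]
        module
      simp only [smul_eq_mul] at key ⊢
      rw [hgdef]
      dsimp only
      rw [harg]
      exact key
    have hp : HasDerivAt (fun t : ℝ => (1 - t) • y + t • z) ((-1 : ℝ) • y + (1:ℝ) • z) 0 := by
      have hp1 : HasDerivAt (fun t : ℝ => (1 - t) • y) ((-1 : ℝ) • y) 0 :=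
        ((hasDerivAt_id (0:ℝ)).const_sub 1).smul_const y
      have hp2 : HasDerivAt (fun t : ℝ => t • z) ((1 : ℝ) • z) 0 :=
        (hasDerivAt_id (0:ℝ)).smul_const z
      exact hp1.add hp2
    have hfd' : HasFDerivAt f (fderiv ℝ f y) ((1 - (0:ℝ)) • y + (0:ℝ) • z) := by
      have := (hdiff y hy).hasFDerivAt
      convert this using 2
      module
    have hgd : HasDerivAt g 0 0 := by
      have := hfd'.comp_hasDerivAt 0 hp
      rw [hfy] at this
      simp only [ContinuousLinearMap.zero_apply] at this; exact this
    have hslope : Filter.Tendsto (slope g 0) (nhdsWithin 0 {(0:ℝ)}ᶜ) (nhds 0) :=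
      hasDerivAt_iff_tendsto_slope.mp hgd
    have hmono : nhdsWithin (0:ℝ) (Set.Ioi 0) ≤ nhdsWithin (0:ℝ) {(0:ℝ)}ᶜ :=
      nhdsWithin_mono 0 fun t ht => (ne_of_gt ht)
    have hev : ∀ᶠ t in nhdsWithin (0:ℝ) (Set.Ioi 0), g 1 - g 0 ≤ slope g 0 t := by
      filter_upwards [Ioo_mem_nhdsGT_of_mem (Set.left_mem_Ico.mpr zero_lt_one)] with t ht
      have hcc := hgconc.2 (Set.left_mem_Icc.mpr zero_le_one) (Set.right_mem_Icc.mpr zero_le_one)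
        (by linarith [ht.2] : (0:ℝ) ≤ 1 - t) ht.1.le (by ring)
      simp only [smul_eq_mul, mul_zero, mul_one, zero_add] at hcc
      rw [slope_def_field, le_div_iff₀ (by linarith [ht.1] : (0:ℝ) < t - 0)]
      nlinarith [hcc]
    have hle : g 1 - g 0 ≤ 0 := ge_of_tendsto (hslope.mono_left hmono) hev
    have hg0 : g 0 = f y := by rw [hgdef]; norm_num
    have hg1 : g 1 = f z := by rw [hgdef]; norm_num
    linarith
  refine ⟨ξ, hξC, hmaxC, hfd, ?_⟩
  intro y hy hcase
  rcases hcase with h | h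
  · exact huniq y hy h
  · exact huniq y hy (hcrit y hy h)
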